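/- If A is a consistent term algebra, then for every term r and every total constructor substitution θ, the instantiation of the evaluation cone of r is contained in the evaluation cone of rθ: ([[r]]^A_id)θ ⊆ [[rθ]]^A_id. -/

import Mathlib

namespace CRWL

/-- Terms over variables `V`, constructor symbols `C`, and function symbols `F`. -/
inductive Tm (V C F : Type) : Type
  | var : V → Tm V C F
  | bot : Tm V C F
  | cons : C → List (Tm V C F) → Tm V C F
  | fn : F → List (Tm V C F) → Tm V C F

variable {V C F : Type}

/-- Approximation ordering on partial constructor terms. -/
inductive Approx : Tm V C F → Tm V C F → Prop
  | bot (t) : Approx .bot t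
  | var (X) : Approx (.var X) (.var X)
  | cons (c : C) {ss ts : List (Tm V C F)} : ss.length = ts.length →
      (∀ p ∈ ss.zip ts, Approx p.1 p.2) → Approx (.cons c ss) (.cons c ts)

/-- Partial constructor terms: no function symbols. -/
inductive IsCTm : Tm V C F → Prop
  | var (X) : IsCTm (.var X)
  | bot : IsCTm .bot
  | cons (c) {ts} : (∀ t ∈ ts, IsCTm t) → IsCTm (.cons c ts)

/-- Total constructor terms: no `⊥`, no function symbols. -/
inductive TotalC : Tm V C F → Prop
  | var (X) : TotalC (.var X)
  | cons (c) {ts} : (∀ t ∈ ts, TotalC t) → TotalC (.cons c ts)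

/-- Homomorphic extension of a substitution to terms. -/
def subst (θ : V → Tm V C F) : Tm V C F → Tm V C F
  | .var X => θ X
  | .bot => .bot
  | .cons c ts => .cons c (ts.attach.map (fun x => subst θ x.1))
  | .fn f ts => .fn f (ts.attach.map (fun x => subst θ x.1))
termination_by t => sizeOf t
decreasing_by all_goals (simp_wf; have := List.sizeOf_lt_of_mem x.2; omega)

/-- A (term-)algebra interpretation of the function symbols: cones of partial
constructor terms as results. -/
abbrev Alg (V C F : Type) := F → List (Tm V C F) → Set (Tm V C F)

/-- `Eval A θ e u` : `u` belongs to the evaluation cone `[[e]]^A_θ`. -/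
inductive Eval (A : Alg V C F) (θ : V → Tm V C F) : Tm V C F → Tm V C F → Prop
  | var {X u} : Approx u (θ X) → Eval A θ (.var X) u
  | bot : Eval A θ .bot .bot
  | cons {c : C} {es us : List (Tm V C F)} {u} : es.length = us.length →
      (∀ p ∈ es.zip us, Eval A θ p.1 p.2) →
      Approx u (.cons c us) → Eval A θ (.cons c es) u
  | fn {f : F} {es us : List (Tm V C F)} {u} : es.length = us.length →
      (∀ p ∈ es.zip us, Eval A θ p.1 p.2) →
      u ∈ A f us → Eval A θ (.fn f es) u

/-- `A` is a term algebra: every value is a cone (contains `⊥`, down-closed) and the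
interpretations are monotone wrt the approximation ordering on arguments. -/
def IsTAlg (A : Alg V C F) : Prop :=
  ∀ f ts, Tm.bot ∈ A f ts ∧
    (∀ u ∈ A f ts, ∀ v, Approx v u → v ∈ A f ts) ∧
    (∀ ts', ts.length = ts'.length → (∀ p ∈ ts.zip ts', Approx p.1 p.2) →
      A f ts ⊆ A f ts')

/-- A conditional rewrite rule `head(lhs) → rhs ⇐ cond`. -/
structure Rul (V C F : Type) where
  head : F
  lhs : List (Tm V C F)
  rhs : Tm V C F
  cond : List (Tm V C F × Tm V C F)

/-- Satisfaction of a joinability statement `a ⋈ b` in `A` under valuation `θ`. -/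
def Sat (A : Alg V C F) (θ : V → Tm V C F) (a b : Tm V C F) : Prop :=
  ∃ t, TotalC t ∧ Eval A θ a t ∧ Eval A θ b t

/-- The immediate consequence operator of a program `R`. -/
def TR (R : Set (Rul V C F)) (A : Alg V C F) : Alg V C F :=
  fun f ts => insert Tm.bot
    { u | ∃ ru ∈ R, ru.head = f ∧ ∃ θ : V → Tm V C F,
        (∀ X, IsCTm (θ X)) ∧
        ru.lhs.length = ts.length ∧
        (∀ p ∈ ru.lhs.zip ts, Approx (subst θ p.1) p.2) ∧
        (∀ p ∈ ru.cond, Sat A Tm.var (subst θ p.1) (subst θ p.2)) ∧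
        Eval A Tm.var (subst θ ru.rhs) u }

/-- A term algebra is consistent iff `(f^A(t̄))θ ⊆ f^A(t̄θ)` for every total
constructor substitution `θ`. -/
def Consistent {V C F : Type} (A : Alg V C F) : Prop :=
  ∀ f ts (θ : V → Tm V C F), (∀ X, TotalC (θ X)) →
    ∀ u ∈ A f ts, subst θ u ∈ A f (ts.map (subst θ))

theorem subst_cons (θ : V → Tm V C F) (c : C) (ts : List (Tm V C F)) :
    subst θ (.cons c ts) = .cons c (ts.map (subst θ)) := by
  rw [subst]; congr 1; simp [List.attach_map_val]

theorem subst_fn (θ : V → Tm V C F) (f : F) (ts : List (Tm V C F)) :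
    subst θ (.fn f ts) = .fn f (ts.map (subst θ)) := by
  rw [subst]; congr 1; simp [List.attach_map_val]

theorem subst_var (θ : V → Tm V C F) (X : V) : subst θ (.var X) = θ X := by rw [subst]

theorem subst_bot (θ : V → Tm V C F) : subst θ (.bot : Tm V C F) = .bot := by rw [subst]

theorem mem_zip_self {l : List (Tm V C F)} {p : Tm V C F × Tm V C F}
    (hp : p ∈ l.zip l) : p.1 = p.2 := by
  induction l with
  | nil => simp at hp
  | cons a l ih =>
    rw [List.zip_cons_cons, List.mem_cons] at hp
    rcases hp with rfl | hp
    · rfl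
    · exact ih hp

theorem approx_refl_of_totalC {t : Tm V C F} (h : TotalC t) : Approx t t := by
  induction h with
  | var X => exact .var X
  | cons c hts ih =>
    refine .cons c rfl ?_
    intro p hp
    rcases List.of_mem_zip hp with ⟨h1, h2⟩
    rw [mem_zip_self hp]
    exact ih _ h2

theorem approx_subst {θ : V → Tm V C F} (hθ : ∀ X, TotalC (θ X))
    {s t : Tm V C F} (h : Approx s t) : Approx (subst θ s) (subst θ t) := by
  induction h with
  | bot t => rw [subst_bot]; exact .bot _
  | var X => rw [subst_var]; exact approx_refl_of_totalC (hθ X)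
  | cons c hlen _ ih =>
    rw [subst_cons, subst_cons]
    refine .cons c (by simp [hlen]) ?_
    intro p hp
    rw [List.zip_map] at hp
    rcases List.mem_map.1 hp with ⟨q, hq, rfl⟩
    exact ih q hq

theorem eval_self_of_totalC (A : Alg V C F) {t : Tm V C F} (h : TotalC t) :
    Eval A Tm.var t t := by
  induction h with
  | var X => exact .var (.var X)
  | cons c hts ih =>
    refine .cons (us := _) rfl ?_ (approx_refl_of_totalC (.cons c hts))
    intro p hp
    rw [mem_zip_self hp]
    rcases List.of_mem_zip hp with ⟨_, h2⟩
    exact ih _ h2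

theorem eval_bot_of_totalC (A : Alg V C F) {t : Tm V C F} (h : TotalC t) :
    Eval A Tm.var t .bot := by
  cases h with
  | var X => exact .var (.bot _)
  | cons c hts =>
    refine .cons (us := _) rfl ?_ (.bot _)
    intro p hp
    rw [mem_zip_self hp]
    rcases List.of_mem_zip hp with ⟨_, h2⟩
    exact eval_self_of_totalC A (hts _ h2)

/-- In a consistent term algebra, instantiation of evaluation cones by a total
constructor substitution is contained in the evaluation cone of the instantiated
term: `([[r]]^A_id)θ ⊆ [[rθ]]^A_id`. -/
theorem consistent_eval_subst {V C F : Type} (A : Alg V C F) (hA : Consistent A)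
    (r : Tm V C F) (θ : V → Tm V C F) (hθ : ∀ X, TotalC (θ X)) :
    ∀ u, Eval A Tm.var r u → Eval A Tm.var (subst θ r) (subst θ u) := by
  intro u h
  induction h with
  | @var X u hu =>
    rw [subst_var]
    cases hu with
    | bot => rw [subst_bot]; exact eval_bot_of_totalC A (hθ X)
    | var => rw [subst_var]; exact eval_self_of_totalC A (hθ X)
  | bot => rw [subst_bot]; exact Eval.bot
  | @cons c es us u hlen _ hu ih =>
    rw [subst_cons]
    refine .cons (us := us.map (subst θ)) (by simp [hlen]) ?_ ?_
    · intro p hp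
      rw [List.zip_map] at hp
      rcases List.mem_map.1 hp with ⟨q, hq, rfl⟩
      exact ih q hq
    · have := approx_subst hθ hu
      rwa [subst_cons] at this
  | @fn f es us u hlen _ hu ih =>
    rw [subst_fn]
    refine .fn (us := us.map (subst θ)) (by simp [hlen]) ?_ ?_
    · intro p hp
      rw [List.zip_map] at hp
      rcases List.mem_map.1 hp with ⟨q, hq, rfl⟩
      exact ih q hq
    · exact hA f us θ hθ u hu

end CRWL
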